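/- The map upCCT : UP → CCT_LTL given by upCCT(π) = {φ ∈ Fm_LTL | π ⊨ φ} is a well-defined bijection from the set of ultimately periodic traces onto the set of complete consistent theories of LTL: for every π ∈ UP, upCCT(π) is a complete consistent theory; upCCT is injective; and every complete consistent LTL theory equals upCCT(π) for some π ∈ UP. -/

import Mathlib

/-- LTL formulae over a set `AP` of atomic propositions:
`⊥ | p | ¬φ | φ∨φ | Xφ | φ U φ`. -/
inductive LTLFormula (AP : Type) : Type
  | bot : LTLFormula AP
  | atom : AP → LTLFormula AP
  | neg : LTLFormula AP → LTLFormula AP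
  | disj : LTLFormula AP → LTLFormula AP → LTLFormula AP
  | next : LTLFormula AP → LTLFormula AP
  | untl : LTLFormula AP → LTLFormula AP → LTLFormula AP

/-- A trace is an infinite sequence of sets of atomic propositions. -/
abbrev Trace (AP : Type) : Type := ℕ → Set AP

/-- The suffix `π^i` of a trace. -/
def Trace.suffix {AP : Type} (π : Trace AP) (i : ℕ) : Trace AP := fun j => π (i + j)

/-- Satisfaction of an LTL formula by a trace. -/
def LTLFormula.sat {AP : Type} : LTLFormula AP → Trace AP → Prop
  | .bot, _ => False
  | .atom p, π => p ∈ π 0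
  | .neg φ, π => ¬ LTLFormula.sat φ π
  | .disj φ ψ, π => LTLFormula.sat φ π ∨ LTLFormula.sat ψ π
  | .next φ, π => LTLFormula.sat φ (π.suffix 1)
  | .untl φ ψ, π => ∃ i, LTLFormula.sat ψ (π.suffix i) ∧ ∀ j < i, LTLFormula.sat φ (π.suffix j)

/-- A Kripke structure: a finite state set (`Fin n`), a nonempty set of initial
states, a left-total transition relation, and a labeling function. -/
structure Kripke (AP : Type) where
  n : ℕ
  init : Set (Fin n)
  init_nonempty : init.Nonempty
  trans : Fin n → Fin n → Prop
  trans_total : ∀ s, ∃ s', trans s s'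
  label : Fin n → Set AP

/-- The traces of a Kripke structure. -/
def Kripke.traces {AP : Type} (M : Kripke AP) : Set (Trace AP) :=
  {π | ∃ ρ : ℕ → Fin M.n, ρ 0 ∈ M.init ∧ (∀ i, M.trans (ρ i) (ρ (i + 1))) ∧
        ∀ i, π i = M.label (ρ i)}

/-- `M ⊨ φ` : every trace of `M` satisfies `φ`. -/
def Kripke.sat {AP : Type} (M : Kripke AP) (φ : LTLFormula AP) : Prop :=
  ∀ π ∈ M.traces, φ.sat π

/-- `M ⊨ X` : `M` satisfies every formula in `X`. -/
def Kripke.satSet {AP : Type} (M : Kripke AP) (X : Set (LTLFormula AP)) : Prop :=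
  ∀ φ ∈ X, M.sat φ

/-- The consequence operator of LTL: `ψ ∈ CnLTL AP X` iff every Kripke
structure satisfying all of `X` satisfies `ψ`. -/
def CnLTL (AP : Type) (X : Set (LTLFormula AP)) : Set (LTLFormula AP) :=
  {ψ | ∀ M : Kripke AP, M.satSet X → M.sat ψ}

/-- The infinite word `ρ σ^ω` determined by a finite prefix `ρ` and a nonempty
finite period `σ`. -/
def extendPer {α : Type} (ρ σ : List α) (hσ : σ ≠ []) : ℕ → α := fun i =>
  if h : i < ρ.length then ρ.get ⟨i, h⟩
  else σ.get ⟨(i - ρ.length) % σ.length, Nat.mod_lt _ (List.length_pos_iff.mpr hσ)⟩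

/-- An infinite word is ultimately periodic if it equals `ρ σ^ω` for finite
words `ρ, σ` with `σ` nonempty. -/
def UltPeriodic {α : Type} (w : ℕ → α) : Prop :=
  ∃ (ρ σ : List α) (hσ : σ ≠ []), w = extendPer ρ σ hσ

/-- The set of formulae satisfied by a trace. -/
def upCCT {AP : Type} (π : Trace AP) : Set (LTLFormula AP) := {φ | φ.sat π}

/-- The complete consistent theories of LTL. -/
def CCT_LTL (AP : Type) : Set (Set (LTLFormula AP)) :=
  {K | CnLTL AP K = K ∧ K ≠ Set.univ ∧ ∀ φ, φ ∈ K ∨ LTLFormula.neg φ ∈ K}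


section UpCCTAux

variable {AP : Type}

lemma Trace.suffix_zero (π : Trace AP) : π.suffix 0 = π :=
  funext fun j => by simp [Trace.suffix]

lemma Trace.suffix_suffix (π : Trace AP) (i j : ℕ) :
    (π.suffix i).suffix j = π.suffix (i + j) :=
  funext fun k => congrArg π (by omega)

/-- Iterated `next`. -/
def niter (AP : Type) : ℕ → LTLFormula AP → LTLFormula AP
  | 0, φ => φ
  | i+1, φ => .next (niter AP i φ)

lemma sat_niter (i : ℕ) (φ : LTLFormula AP) (π : Trace AP) :
    (niter AP i φ).sat π ↔ φ.sat (π.suffix i) := by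
  induction i generalizing π with
  | zero => rw [niter, Trace.suffix_zero]
  | succ i ih =>
      show (niter AP i φ).sat (π.suffix 1) ↔ _
      rw [ih, Trace.suffix_suffix]
      exact Iff.of_eq (congrArg _ (congrArg π.suffix (by omega)))

/-- State index along the lasso with prefix length `P` and period `Q`. -/
def sIdx (P Q i : ℕ) : ℕ := if i < P then i else P + (i - P) % Q

lemma sIdx_zero (P Q : ℕ) : sIdx P Q 0 = 0 := by
  unfold sIdx
  split
  · rfl
  · simp only [Nat.zero_sub, Nat.zero_mod, Nat.add_zero]; omega

lemma sIdx_lt (P Q i : ℕ) (hQ : 0 < Q) : sIdx P Q i < P + Q := by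
  unfold sIdx
  split
  · omega
  · have := Nat.mod_lt (i - P) hQ; omega

lemma sIdx_step (P Q i : ℕ) (hQ : 0 < Q) :
    sIdx P Q (i + 1) = if sIdx P Q i + 1 < P + Q then sIdx P Q i + 1 else P := by
  unfold sIdx
  by_cases h1 : i < P
  · by_cases h2 : i + 1 < P
    · rw [if_pos h2, if_pos h1, if_pos (by omega)]
    · have hP : i + 1 = P := by omega
      rw [if_neg h2, if_pos h1, if_pos (by omega), hP]
      simp
  · have h2 : ¬ i + 1 < P := by omega
    have hm : (i - P) % Q < Q := Nat.mod_lt _ hQ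
    have key : (i + 1 - P) % Q = ((i - P) % Q + 1) % Q := by
      rw [show i + 1 - P = (i - P) + 1 from by omega, Nat.mod_add_mod]
    rw [if_neg h2, if_neg h1, key]
    by_cases h3 : (i - P) % Q + 1 < Q
    · rw [if_pos (by omega), Nat.mod_eq_of_lt h3]
      omega
    · have hQe : (i - P) % Q + 1 = Q := by omega
      rw [if_neg (by omega), hQe, Nat.mod_self, Nat.add_zero]

lemma extendPer_sIdx {α : Type} (ρ σ : List α) (hσ : σ ≠ []) (i : ℕ) :
    extendPer ρ σ hσ (sIdx ρ.length σ.length i) = extendPer ρ σ hσ i := by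
  have hQ : 0 < σ.length := List.length_pos_iff.mpr hσ
  unfold sIdx
  by_cases h : i < ρ.length
  · rw [if_pos h]
  · rw [if_neg h]
    have hm : (i - ρ.length) % σ.length < σ.length := Nat.mod_lt _ hQ
    unfold extendPer
    rw [dif_neg (by omega), dif_neg h]
    congr 1
    exact Fin.ext (by
      simp only [Nat.add_sub_cancel_left]
      exact Nat.mod_eq_of_lt hm)

/-- The deterministic lasso Kripke structure whose unique trace is `extendPer ρ σ`. -/
def lasso (ρ σ : List (Set AP)) (hσ : σ ≠ []) : Kripke AP where
  n := ρ.length + σ.length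
  init := {⟨0, by have := List.length_pos_iff.mpr hσ; omega⟩}
  init_nonempty := ⟨_, rfl⟩
  trans a b := (b : ℕ) = if (a : ℕ) + 1 < ρ.length + σ.length then (a : ℕ) + 1 else ρ.length
  trans_total a := by
    have hQ := List.length_pos_iff.mpr hσ
    refine ⟨⟨if (a : ℕ) + 1 < ρ.length + σ.length then (a : ℕ) + 1 else ρ.length, ?_⟩, rfl⟩
    split <;> omega
  label s := extendPer ρ σ hσ (s : ℕ)

lemma lasso_run_val (ρ σ : List (Set AP)) (hσ : σ ≠ []) (g : ℕ → Fin (lasso ρ σ hσ).n)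
    (h0 : g 0 ∈ (lasso ρ σ hσ).init)
    (ht : ∀ k, (lasso ρ σ hσ).trans (g k) (g (k+1))) :
    ∀ k, (g k : ℕ) = sIdx ρ.length σ.length k := by
  intro k
  induction k with
  | zero =>
      rw [sIdx_zero]
      have h0' : g 0 = ⟨0, by show 0 < ρ.length + σ.length; have := List.length_pos_iff.mpr hσ; omega⟩ := h0
      rw [h0']
  | succ k ih =>
      have := ht k
      rw [this, ih, ← sIdx_step ρ.length σ.length k (List.length_pos_iff.mpr hσ)]

lemma lasso_mem (ρ σ : List (Set AP)) (hσ : σ ≠ []) :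
    extendPer ρ σ hσ ∈ (lasso ρ σ hσ).traces := by
  have hQ : 0 < σ.length := List.length_pos_iff.mpr hσ
  refine ⟨fun k => ⟨sIdx ρ.length σ.length k, sIdx_lt _ _ _ hQ⟩, ?_, ?_, ?_⟩
  · show _ ∈ ({⟨0, _⟩} : Set (Fin _))
    refine Set.mem_singleton_iff.mpr ?_
    exact Fin.ext (sIdx_zero _ _)
  · intro k
    exact sIdx_step ρ.length σ.length k hQ
  · intro k
    exact (extendPer_sIdx ρ σ hσ k).symm

lemma lasso_unique (ρ σ : List (Set AP)) (hσ : σ ≠ []) (π : Trace AP)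
    (h : π ∈ (lasso ρ σ hσ).traces) : π = extendPer ρ σ hσ := by
  obtain ⟨g, h0, ht, hl⟩ := h
  funext k
  rw [hl k]
  show extendPer ρ σ hσ ((g k : ℕ)) = _
  rw [lasso_run_val ρ σ hσ g h0 ht k, extendPer_sIdx]

lemma upCCT_mem (π : Trace AP) (h : UltPeriodic π) : upCCT π ∈ CCT_LTL AP := by
  obtain ⟨ρ, σ, hσ, rfl⟩ := h
  refine ⟨?_, ?_, fun φ => Classical.em _⟩
  · apply Set.Subset.antisymm
    · intro ψ hψ
      have hsat : (lasso ρ σ hσ).satSet (upCCT (extendPer ρ σ hσ)) := by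
        intro φ hφ π' hπ'
        rw [lasso_unique ρ σ hσ π' hπ']
        exact hφ
      exact hψ (lasso ρ σ hσ) hsat _ (lasso_mem ρ σ hσ)
    · intro ψ hψ M hM
      exact hM ψ hψ
  · intro h
    have : LTLFormula.bot ∈ upCCT (extendPer ρ σ hσ) := h ▸ Set.mem_univ _
    exact this

/-- A run of an arbitrary Kripke structure, by choice. -/
noncomputable def someRun (M : Kripke AP) : ℕ → Fin M.n := fun k =>
  Nat.rec M.init_nonempty.choose (fun _ s => (M.trans_total s).choose) k

lemma extendPer_range_map {α : Type} (f : ℕ → α) (i j : ℕ) (hij : i < j)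
    (hper : (List.range (j-i)).map (fun k => f (i+k)) ≠ []) (k : ℕ) :
    extendPer ((List.range i).map f) ((List.range (j-i)).map (fun k => f (i+k))) hper k
      = f (sIdx i (j-i) k) := by
  have hQ : 0 < j - i := by omega
  unfold extendPer sIdx
  by_cases hk : k < i
  · rw [dif_pos (by simpa using hk), if_pos hk]
    simp
  · rw [dif_neg (by simpa using hk), if_neg hk]
    simp

end UpCCTAux

/-- `upCCT(π) = {φ | π ⊨ φ}` is a well-defined bijection between
ultimately periodic traces and complete consistent LTL theories. -/
theorem upCCT_bijection (AP : Type) [Fintype AP] [Nonempty AP] :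
    (∀ π : Trace AP, UltPeriodic π → upCCT π ∈ CCT_LTL AP) ∧
    (∀ π π' : Trace AP, UltPeriodic π → UltPeriodic π' →
        upCCT π = upCCT π' → π = π') ∧
    (∀ K ∈ CCT_LTL AP, ∃ π : Trace AP, UltPeriodic π ∧ K = upCCT π) := by
  refine ⟨fun π h => upCCT_mem π h, ?_, ?_⟩
  · -- injectivity
    intro π π' _ _ h
    funext i
    ext p
    have h1 := Set.ext_iff.mp h (niter AP i (.atom p))
    simp only [upCCT, Set.mem_setOf_eq, sat_niter] at h1
    simpa [LTLFormula.sat, Trace.suffix] using h1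
  · -- surjectivity
    rintro K ⟨hCn, hne, hcomp⟩
    obtain ⟨ψ, hψ⟩ : ∃ ψ, ψ ∉ K := by
      by_contra h
      push_neg at h
      exact hne (Set.eq_univ_of_forall h)
    have hψ' : ψ ∉ CnLTL AP K := by rw [hCn]; exact hψ
    have hM : ∃ M : Kripke AP, M.satSet K := by
      by_contra h
      push_neg at h
      exact hψ' fun M hMK => absurd hMK (h M)
    obtain ⟨M, hM⟩ := hM
    have hr0 : someRun M 0 ∈ M.init := M.init_nonempty.choose_spec
    have hrt : ∀ k, M.trans (someRun M k) (someRun M (k+1)) :=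
      fun k => (M.trans_total (someRun M k)).choose_spec
    obtain ⟨a, b, hab, heq⟩ := Finite.exists_ne_map_eq_of_infinite (someRun M)
    obtain ⟨i, j, hij, hrij⟩ : ∃ i j, i < j ∧ someRun M i = someRun M j := by
      rcases lt_or_gt_of_ne hab with h | h
      exacts [⟨a, b, h, heq⟩, ⟨b, a, h, heq.symm⟩]
    have hQ : 0 < j - i := by omega
    have hper : (List.range (j-i)).map (fun k => M.label (someRun M (i+k))) ≠ [] := by
      apply List.ne_nil_of_length_pos
      simpa using hQ
    set w : Trace AP :=
      extendPer ((List.range i).map (fun k => M.label (someRun M k)))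
        ((List.range (j-i)).map (fun k => M.label (someRun M (i+k)))) hper with hw
    have hwval : ∀ k, w k = M.label (someRun M (sIdx i (j-i) k)) :=
      fun k => extendPer_range_map (fun k => M.label (someRun M k)) i j hij hper k
    have hwtr : w ∈ M.traces := by
      refine ⟨fun k => someRun M (sIdx i (j-i) k), ?_, ?_, hwval⟩
      · show someRun M (sIdx i (j-i) 0) ∈ M.init
        rw [sIdx_zero]; exact hr0
      · intro k
        show M.trans (someRun M (sIdx i (j-i) k)) (someRun M (sIdx i (j-i) (k+1)))
        rw [sIdx_step i (j-i) k hQ]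
        by_cases h : sIdx i (j-i) k + 1 < i + (j - i)
        · rw [if_pos h]
          exact hrt _
        · rw [if_neg h]
          have hlt := sIdx_lt i (j-i) k hQ
          have h2 := hrt (sIdx i (j-i) k)
          rw [show sIdx i (j-i) k + 1 = j from by omega, ← hrij] at h2
          exact h2
    have hKw : K ⊆ upCCT w := fun φ hφ => hM φ hφ w hwtr
    refine ⟨w, ⟨_, _, hper, hw⟩, ?_⟩
    apply Set.Subset.antisymm hKw
    intro φ hφ
    rcases hcomp φ with h | h
    · exact h
    · exact absurd hφ (hKw h)
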